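/- (Steiner's second trick) Let P, Q, A, C be points with line AC parallel to line PQ and A, C not on line PQ, with A ≠ C. Let R be the intersection of lines PA and QC, and B the intersection of lines PC and QA (assume both exist). Then line RB intersects line PQ in the midpoint of segment PQ. -/

import Mathlib

open InnerProductSpace Affine

private lemma mem_line_exists' {V Pt : Type*} [NormedAddCommGroup V] [NormedSpace ℝ V]
    [MetricSpace Pt] [NormedAddTorsor V Pt] {p₁ p₂ X : Pt}
    (h : X ∈ line[ℝ, p₁, p₂]) : ∃ r : ℝ, r • (p₂ -ᵥ p₁) = X -ᵥ p₁ := by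
  rw [← vsub_vadd X p₁] at h
  exact vadd_left_mem_affineSpan_pair.mp h

theorem steiner_second_trick
    (P Q A C R B : EuclideanSpace ℝ (Fin 2))
    (hPQ : P ≠ Q) (hAC : A ≠ C)
    (hAnot : A ∉ line[ℝ, P, Q]) (hCnot : C ∉ line[ℝ, P, Q])
    (hpar : line[ℝ, A, C] ∥ line[ℝ, P, Q])
    (hR : R ∈ line[ℝ, P, A] ∧ R ∈ line[ℝ, Q, C])
    (hRu : ∀ X, X ∈ line[ℝ, P, A] → X ∈ line[ℝ, Q, C] → X = R)
    (hB : B ∈ line[ℝ, P, C] ∧ B ∈ line[ℝ, Q, A])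
    (hBu : ∀ X, X ∈ line[ℝ, P, C] → X ∈ line[ℝ, Q, A] → X = B) :
    midpoint ℝ P Q ∈ line[ℝ, R, B] := by
  have hvne : Q - P ≠ 0 := sub_ne_zero.mpr (Ne.symm hPQ)
  have hunot : ∀ t : ℝ, t • (Q - P) ≠ A - P := by
    intro t ht
    apply hAnot
    have h2 : t • (Q -ᵥ P) = A -ᵥ P := ht
    rw [← vsub_vadd A P]
    exact vadd_left_mem_affineSpan_pair.mpr ⟨t, h2⟩
  have indep : ∀ a b : ℝ, a • (A - P) + b • (Q - P) = 0 → a = 0 ∧ b = 0 := by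
    intro a b hab
    have ha : a = 0 := by
      by_contra ha
      apply hunot (a⁻¹ * (-b))
      have h1 : a • (A - P) = (-b) • (Q - P) := by
        linear_combination (norm := module) hab
      rw [mul_smul, ← h1, smul_smul, inv_mul_cancel₀ ha, one_smul]
    refine ⟨ha, ?_⟩
    rw [ha, zero_smul, zero_add] at hab
    exact (smul_eq_zero.mp hab).resolve_right hvne
  -- parallel: C - A = s • (Q - P)
  have hdir : (line[ℝ, A, C]).direction = (line[ℝ, P, Q]).direction := hpar.direction_eq
  obtain ⟨s, hs⟩ : ∃ s : ℝ, C - A = s • (Q - P) := by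
    have h1 : C -ᵥ A ∈ (line[ℝ, A, C]).direction := by
      rw [direction_affineSpan]
      exact vsub_rev_mem_vectorSpan_pair ℝ A C
    rw [hdir, direction_affineSpan, mem_vectorSpan_pair_rev] at h1
    obtain ⟨s', hs'⟩ := h1
    exact ⟨s', hs'.symm⟩
  have hs0 : s ≠ 0 := by
    rintro rfl
    rw [zero_smul, sub_eq_zero] at hs
    exact hAC hs.symm
  obtain ⟨t₁, ht₁⟩ := mem_line_exists' hR.1
  obtain ⟨r₁, hr₁⟩ := mem_line_exists' hR.2
  obtain ⟨t₂, ht₂⟩ := mem_line_exists' hB.1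
  obtain ⟨w, hw⟩ := mem_line_exists' hB.2
  simp only [vsub_eq_sub] at ht₁ hr₁ ht₂ hw
  -- R coordinates
  have hRcomb : (t₁ - r₁) • (A - P) + (-(r₁ * (s - 1)) - 1) • (Q - P) = 0 := by
    linear_combination (norm := module) ht₁ - hr₁ + r₁ • hs
  obtain ⟨hR1, hR2⟩ := indep _ _ hRcomb
  have hr₁s : r₁ * (s - 1) = -1 := by linarith
  have hs1 : s ≠ 1 := by
    rintro rfl
    simp at hr₁s
  have hs1' : 1 - s ≠ 0 := by
    intro h; apply hs1; linarith
  have ht₁v : t₁ = 1 / (1 - s) := by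
    have h1 : t₁ = r₁ := by linarith
    rw [h1]
    field_simp
    linarith [hr₁s]
  -- B coordinates
  have hBcomb : (t₂ - w) • (A - P) + (t₂ * s + w - 1) • (Q - P) = 0 := by
    linear_combination (norm := module) ht₂ - hw - t₂ • hs
  obtain ⟨hB1, hB2⟩ := indep _ _ hBcomb
  have hws : w * (s + 1) = 1 := by
    have h1 : t₂ = w := by linarith
    rw [h1] at hB2
    linear_combination hB2
  have hs2 : s ≠ -1 := by
    rintro rfl
    simp at hws
  have hs2' : 1 + s ≠ 0 := by
    intro h; apply hs2; linarith
  have ht₂v : t₂ = 1 / (1 + s) := by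
    have h1 : t₂ = w := by linarith
    rw [h1]
    field_simp
    linarith [hws]
  rw [ht₁v] at ht₁
  rw [ht₂v] at ht₂
  -- explicit positions
  have hReq : R = (1 / (1 - s)) • (A - P) + P := by
    linear_combination (norm := module) -ht₁
  have hBeq : B = (1 / (1 + s)) • ((A - P) + s • (Q - P)) + P := by
    linear_combination (norm := module) -ht₂ + (1 / (1 + s)) • hs
  have hM : midpoint ℝ P Q = (2⁻¹ : ℝ) • (Q - P) + P := by
    have h1 : midpoint ℝ P Q -ᵥ P = (⅟ 2 : ℝ) • (Q -ᵥ P) := midpoint_vsub_left P Q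
    rw [invOf_eq_inv, vsub_eq_sub, vsub_eq_sub] at h1
    linear_combination (norm := module) h1
  have key : midpoint ℝ P Q = AffineMap.lineMap R B ((1 + s) / (2 * s)) := by
    rw [AffineMap.lineMap_apply]
    simp only [vsub_eq_sub, vadd_eq_add]
    rw [hM, hReq, hBeq]
    match_scalars
    · field_simp
    · field_simp
      ring
    · field_simp
      ring
  rw [key]
  exact AffineMap.lineMap_mem_affineSpan_pair _ _ _
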